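/- If N is an even perfect number that can be written as the sum of 2 cubes of natural numbers (i.e., N = a³ + b³ for some natural numbers a, b), then N = 28. -/

import Mathlib

open Finset

private lemma sum_two_pow_aux (n : ℕ) : (∑ i ∈ Finset.range n, 2 ^ i) + 1 = 2 ^ n := by
  induction n with
  | zero => simp
  | succ n ih => rw [Finset.sum_range_succ, pow_succ]; omega

/-- Euler's direction of the Euclid–Euler theorem. -/
private lemma euler_direction (N : ℕ) (hperf : Nat.Perfect N) (heven : Even N) :
    ∃ k q : ℕ, Nat.Prime q ∧ q + 1 = 2 ^ (k + 1) ∧ 1 ≤ k ∧ N = 2 ^ k * q := by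
  have hN0 : N ≠ 0 := hperf.2.ne'
  set k := N.factorization 2 with hk
  set m := N / 2 ^ k with hmdef
  have hm2 : ¬ 2 ∣ m := Nat.not_dvd_ordCompl Nat.prime_two hN0
  have hNm : 2 ^ k * m = N := Nat.ordProj_mul_ordCompl_eq_self N 2
  have hm0 : m ≠ 0 := by
    intro h; rw [h, mul_zero] at hNm; exact hN0 hNm.symm
  have hcop : (2 ^ k).Coprime m :=
    Nat.Coprime.pow_left _ ((Nat.prime_two.coprime_iff_not_dvd).mpr hm2)
  have hσ : ∑ d ∈ N.divisors, d = 2 * N :=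
    (Nat.perfect_iff_sum_divisors_eq_two_mul hperf.2).mp hperf
  have hsum2 : ∑ d ∈ (2 ^ k).divisors, d = ∑ i ∈ Finset.range (k + 1), 2 ^ i :=
    Nat.sum_divisors_prime_pow Nat.prime_two
  -- k ≥ 1
  have hk1 : 1 ≤ k := by
    rcases Nat.eq_zero_or_pos k with h0 | h; swap; · exact h
    exfalso
    rw [h0, pow_zero, one_mul] at hNm
    exact hm2 (hNm ▸ heven.two_dvd)
  set q : ℕ := 2 ^ (k + 1) - 1 with hqdef
  have hq1 : q + 1 = 2 ^ (k + 1) := by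
    have : 1 ≤ 2 ^ (k + 1) := Nat.one_le_two_pow
    omega
  have hq3 : 3 ≤ q := by
    have : 2 ^ 2 ≤ 2 ^ (k + 1) := Nat.pow_le_pow_right (by norm_num) (by omega)
    omega
  set S : ℕ := ∑ d ∈ m.divisors, d with hSdef
  have key : q * S = (q + 1) * m := by
    have h1 : ∑ d ∈ (2 ^ k * m).divisors, d
        = (∑ d ∈ (2 ^ k).divisors, d) * S := hcop.sum_divisors_mul
    have h2 : (∑ d ∈ (2 ^ k).divisors, d) = q := by
      have := sum_two_pow_aux (k + 1)
      omega
    rw [hNm, hσ] at h1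
    have h3 : 2 * N = 2 ^ (k + 1) * m := by
      rw [← hNm]; ring
    rw [h3, ← hq1] at h1
    rw [h2] at h1
    omega
  -- q divides m
  have hqm : q ∣ m := by
    have hcq : q.Coprime (q + 1) := by simp [Nat.Coprime]
    have hd : q ∣ (q + 1) * m := ⟨S, key.symm⟩
    rw [mul_comm] at hd
    exact hcq.dvd_of_dvd_mul_right hd
  obtain ⟨j, hj⟩ := hqm
  have hqpos : 0 < q := by omega
  have hS : S = m + j := by
    have : q * S = q * (m + j) := by
      rw [key, hj]; ring
    exact Nat.eq_of_mul_eq_mul_left hqpos this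
  have hprop : (∑ d ∈ m.properDivisors, d) = j := by
    have := Nat.sum_divisors_eq_sum_properDivisors_add_self (n := m)
    omega
  have hj0 : j ≠ 0 := by
    intro h; rw [h, mul_zero] at hj; exact hm0 hj
  have hjm : j < m := by
    have h1j : 1 * j < q * j := Nat.mul_lt_mul_of_pos_right (by omega) (by omega)
    omega
  have hjdvd : j ∣ m := ⟨q, by rw [hj, mul_comm]⟩
  have := Nat.sum_properDivisors_dvd (n := m) (by rw [hprop]; exact hjdvd)
  have hj1 : j = 1 := by omega
  have hmprime : m.Prime := by
    rw [← Nat.sum_properDivisors_eq_one_iff_prime, hprop, hj1]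
  rw [hj, hj1, mul_one] at hNm hmprime
  exact ⟨k, q, hmprime, hq1, hk1, hNm.symm⟩

theorem even_perfect_sum_two_cubes_eq_28 (N : ℕ) (hperf : Nat.Perfect N)
    (heven : Even N) (a b : ℕ) (h : N = a ^ 3 + b ^ 3) : N = 28 := by
  obtain ⟨k, q, hq, hq1, hk1, hN⟩ := euler_direction N hperf heven
  have hq3 : 3 ≤ q := by
    have : 2 ^ 2 ≤ 2 ^ (k + 1) := Nat.pow_le_pow_right (by norm_num) (by omega)
    omega
  set m : ℕ := a + b with hm
  have hab : a * b ≤ a ^ 2 + b ^ 2 := by nlinarith [sq_nonneg (a - b), Nat.zero_le (a * b)]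
  have hab' : a * b ≤ a ^ 2 + b ^ 2 := hab
  set c : ℕ := a ^ 2 + b ^ 2 - a * b with hc
  have hNc : N = m * c := by
    have : (N : ℤ) = (m : ℤ) * ((a : ℤ) ^ 2 + b ^ 2 - a * b) := by
      push_cast [h, hm]; ring
    have hcz : (c : ℤ) = (a : ℤ) ^ 2 + b ^ 2 - a * b := by
      rw [hc, Nat.cast_sub hab]
      push_cast
      ring
    rw [← hcz] at this
    exact_mod_cast this
  have hNle : N ≤ m ^ 3 := by
    have : (N : ℤ) ≤ (m : ℤ) ^ 3 := by
      push_cast [h, hm]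
      nlinarith [mul_nonneg (mul_nonneg (Int.ofNat_nonneg a) (Int.ofNat_nonneg b)) (add_nonneg (Int.ofNat_nonneg a) (Int.ofNat_nonneg b))]
    exact_mod_cast this
  have h4N : m ^ 3 ≤ 4 * N := by
    have : (m : ℤ) ^ 3 ≤ 4 * (N : ℤ) := by
      push_cast [h, hm]
      nlinarith [mul_nonneg (add_nonneg (Int.ofNat_nonneg a) (Int.ofNat_nonneg b)) (sq_nonneg ((a : ℤ) - b))]
    exact_mod_cast this
  have hmsq : m ^ 2 = c + 3 * (a * b) := by
    have : m ^ 2 = a ^ 2 + b ^ 2 + 2 * (a * b) := by rw [hm]; ring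
    omega
  have hmdvd : m ∣ N := ⟨c, hNc⟩
  -- q does not divide m
  have hqnm : ¬ q ∣ m := by
    intro hdvd
    have hqlem : q ≤ m := Nat.le_of_dvd (by
      rcases Nat.eq_zero_or_pos m with h0 | h; swap; · exact h
      exfalso
      rw [h0, zero_mul] at hNc
      exact hperf.2.ne' hNc) hdvd
    have h1 : q ^ 3 ≤ m ^ 3 := Nat.pow_le_pow_left hqlem 3
    have e2 : q + 1 = 2 * 2 ^ k := by rw [hq1]; ring
    have h2 : 4 * N = 2 * (q + 1) * q := by
      rw [hN, e2]; ring
    nlinarith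
  -- hence m is a power of 2
  have hmdvd2 : m ∣ 2 ^ k := by
    have hcop : q.Coprime m := (Nat.Prime.coprime_iff_not_dvd hq).mpr hqnm
    have : m ∣ 2 ^ k * q := hN ▸ hmdvd
    exact (Nat.Coprime.dvd_of_dvd_mul_right hcop.symm) this
  obtain ⟨i, hik, hmi⟩ := (Nat.dvd_prime_pow Nat.prime_two).mp hmdvd2
  -- exponent bounds: 2k + 1 ≤ 3 i ≤ 2k + 2
  have hlow : 2 ^ (2 * k) < 2 ^ (3 * i) := by
    calc 2 ^ (2 * k) = 2 ^ k * 2 ^ k := by rw [← pow_add]; ring_nf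
    _ < 2 ^ k * q := by
      apply mul_lt_mul_of_pos_left _ (Nat.pow_pos (by norm_num) : 0 < 2 ^ k)
      have : 2 ^ (k + 1) = 2 * 2 ^ k := by ring
      omega
    _ = N := hN.symm
    _ ≤ m ^ 3 := hNle
    _ = 2 ^ (3 * i) := by rw [hmi, ← pow_mul]; ring_nf
  have hhigh : 2 ^ (3 * i) < 2 ^ (2 * k + 3) := by
    calc 2 ^ (3 * i) = m ^ 3 := by rw [hmi, ← pow_mul]; ring_nf
    _ ≤ 4 * N := h4N
    _ = 2 ^ (k + 2) * q := by rw [hN]; ring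
    _ < 2 ^ (k + 2) * 2 ^ (k + 1) := by
      apply mul_lt_mul_of_pos_left _ (Nat.pow_pos (by norm_num) : 0 < 2 ^ (k + 2))
      omega
    _ = 2 ^ (2 * k + 3) := by rw [← pow_add]; ring_nf
  have hl : 2 * k < 3 * i := (Nat.pow_lt_pow_iff_right (by norm_num)).mp hlow
  have hh : 3 * i < 2 * k + 3 := (Nat.pow_lt_pow_iff_right (by norm_num)).mp hhigh
  rcases (by omega : 3 * i = 2 * k + 1 ∨ 3 * i = 2 * k + 2) with hcase | hcase
  · -- 3i = 2k+1 : derive 3ab = 2^e, contradiction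
    exfalso
    have hik' : i ≤ k := by omega
    set e : ℕ := k - i with he
    have hke : k = i + e := by omega
    -- c = 2^e * q
    have hceq : c = 2 ^ e * q := by
      have h1 : 2 ^ i * c = 2 ^ i * (2 ^ e * q) := by
        rw [← mul_assoc, ← pow_add, ← hke, ← hmi, ← hNc, hN]
      exact Nat.eq_of_mul_eq_mul_left (Nat.pow_pos (by norm_num) : 0 < 2 ^ i) h1
    -- m^2 = 2^e * (q+1)
    have hm2eq : m ^ 2 = 2 ^ e * (q + 1) := by
      rw [hmi, ← pow_mul, hq1, ← pow_add]
      congr 1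
      omega
    have h3ab : 3 * (a * b) = 2 ^ e := by
      have := hmsq
      rw [hceq, hm2eq] at this
      have hexp : 2 ^ e * (q + 1) = 2 ^ e * q + 2 ^ e := by ring
      omega
    have : (3 : ℕ) ∣ 2 ^ e := ⟨a * b, h3ab.symm⟩
    have h32 : (3 : ℕ) ∣ 2 := Nat.Prime.dvd_of_dvd_pow (by norm_num) this
    omega
  · -- 3i = 2k+2 : then 3 ∣ k+1, so 7 ∣ q, so q = 7, N = 28
    have h3 : 3 ∣ k + 1 := by omega
    obtain ⟨j, hj⟩ := h3
    have h8 : 2 ^ (k + 1) % 7 = 1 := by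
      rw [hj, pow_mul]
      rw [Nat.pow_mod]
      norm_num
    have h7q : 7 ∣ q := by omega
    have := (Nat.Prime.eq_one_or_self_of_dvd hq 7 h7q)
    have hq7 : q = 7 := by omega
    have hk2 : k = 2 := by
      have : 2 ^ (k + 1) = 2 ^ 3 := by rw [← hq1, hq7]; norm_num
      have := Nat.pow_right_injective (le_refl 2) this
      omega
    rw [hN, hq7, hk2]; norm_num
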